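/- For every integer k ≥ 6, there exists a coalition partition Ψ of the path P_k with four parts such that the coalition graph CG(P_k, Ψ) is isomorphic to the star K_{1,3}. In particular, one may take Ψ = {A, B, C, D} where A = {s_1,...,s_{k−4}} ∪ {s_k}, B = {s_{k−3}}, C = {s_{k−2}}, D = {s_{k−1}} for the path s_1 s_2 ... s_k. -/

import Mathlib

open SimpleGraph

attribute [local instance] Classical.propDecidable

def Dominates {V : Type*} (G : SimpleGraph V) (S : Set V) : Prop :=
  ∀ v, v ∉ S → ∃ u ∈ S, G.Adj u v

def Coalition {V : Type*} (G : SimpleGraph V) (A B : Set V) : Prop :=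
  Disjoint A B ∧ ¬ Dominates G A ∧ ¬ Dominates G B ∧ Dominates G (A ∪ B)

def IsCoalitionPartition {V : Type*} (G : SimpleGraph V) (P : Finset (Set V)) : Prop :=
  (∀ A ∈ P, A.Nonempty) ∧
  (∀ A ∈ P, ∀ B ∈ P, A ≠ B → Disjoint A B) ∧
  (∀ v : V, ∃ A ∈ P, v ∈ A) ∧
  (∀ A ∈ P, (Dominates G A ∧ ∃ v, A = {v}) ∨
    (¬ Dominates G A ∧ ∃ B ∈ P, B ≠ A ∧ Coalition G A B))

noncomputable def coalitionNumber {V : Type*} (G : SimpleGraph V) : ℕ :=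
  sSup {n | ∃ P : Finset (Set V), IsCoalitionPartition G P ∧ P.card = n}

def coalitionGraph {V : Type*} (G : SimpleGraph V) (P : Finset (Set V)) :
    SimpleGraph {A : Set V // A ∈ P} where
  Adj A B := Coalition G A.1 B.1
  symm := by
    constructor
    rintro A B ⟨d, na, nb, u⟩
    exact ⟨d.symm, nb, na, by rwa [Set.union_comm]⟩
  loopless := by
    constructor
    rintro ⟨A, hA⟩ ⟨d, na, nb, u⟩
    rw [Set.union_self] at u
    exact na u

lemma coal_symm {V : Type*} {G : SimpleGraph V} {A B : Set V} (h : Coalition G A B) :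
    Coalition G B A := by
  obtain ⟨d, na, nb, u⟩ := h
  exact ⟨d.symm, nb, na, by rwa [Set.union_comm]⟩

lemma coal_self {V : Type*} {G : SimpleGraph V} {A : Set V} : ¬ Coalition G A A := by
  rintro ⟨d, na, nb, u⟩
  rw [Set.union_self] at u
  exact na u

lemma notdom_low {k : ℕ} (hk : 6 ≤ k) (S : Set (Fin k)) (hS : ∀ i ∈ S, 2 ≤ i.val) :
    ¬ Dominates (pathGraph k) S := by
  intro h
  have h0 : (⟨0, by omega⟩ : Fin k) ∉ S := fun hm => by have := hS _ hm; simp at this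
  obtain ⟨u, hu, hadj⟩ := h _ h0
  rw [pathGraph_adj] at hadj
  have := hS _ hu
  simp at hadj
  omega

lemma notdom_A {k : ℕ} (hk : 6 ≤ k) :
    ¬ Dominates (pathGraph k) {i : Fin k | i.val ≤ k - 5 ∨ i.val = k - 1} := by
  intro h
  have h0 : (⟨k-3, by omega⟩ : Fin k) ∉ {i : Fin k | i.val ≤ k - 5 ∨ i.val = k - 1} := by
    simp only [Set.mem_setOf_eq]; omega
  obtain ⟨u, hu, hadj⟩ := h _ h0
  rw [pathGraph_adj] at hadj
  simp only [Set.mem_setOf_eq] at hu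
  simp only [Fin.val_mk] at hadj
  have : u.val < k := u.isLt
  omega

lemma dom_union {k : ℕ} (hk : 6 ≤ k) (b : ℕ)
    (hb : b = k - 4 ∨ b = k - 3 ∨ b = k - 2) :
    Dominates (pathGraph k)
      ({i : Fin k | i.val ≤ k - 5 ∨ i.val = k - 1} ∪ {i : Fin k | i.val = b}) := by
  intro v hv
  simp only [Set.mem_union, Set.mem_setOf_eq, not_or] at hv
  obtain ⟨⟨hv1, hv2⟩, hv3⟩ := hv
  have hvk : v.val < k := v.isLt
  by_cases h4 : v.val = k - 4
  · refine ⟨⟨k - 5, by omega⟩, Or.inl ?_, ?_⟩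
    · simp only [Set.mem_setOf_eq, Fin.val_mk]; omega
    · rw [pathGraph_adj]; simp only [Fin.val_mk]; omega
  · by_cases h3 : v.val = k - 3
    · refine ⟨⟨b, by omega⟩, Or.inr ?_, ?_⟩
      · simp only [Set.mem_setOf_eq, Fin.val_mk]
      · rw [pathGraph_adj]; simp only [Fin.val_mk]; omega
    · by_cases hb3 : b = k - 3
      · refine ⟨⟨k - 3, by omega⟩, Or.inr ?_, ?_⟩
        · simp only [Set.mem_setOf_eq, Fin.val_mk]; omega
        · rw [pathGraph_adj]; simp only [Fin.val_mk]; omega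
      · refine ⟨⟨k - 1, by omega⟩, Or.inl ?_, ?_⟩
        · exact Or.inr rfl
        · rw [pathGraph_adj]; simp only [Fin.val_mk]; omega

lemma coal_AX {k : ℕ} (hk : 6 ≤ k) (b : ℕ)
    (hb : b = k - 4 ∨ b = k - 3 ∨ b = k - 2) :
    Coalition (pathGraph k) {i : Fin k | i.val ≤ k - 5 ∨ i.val = k - 1}
      {i : Fin k | i.val = b} := by
  refine ⟨?_, notdom_A hk, notdom_low hk _ ?_, dom_union hk b hb⟩
  · rw [Set.disjoint_left]
    intro i hi hib
    simp only [Set.mem_setOf_eq] at hi hib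
    omega
  · intro i hi
    simp only [Set.mem_setOf_eq] at hi
    omega

lemma notcoal_sing {k : ℕ} (hk : 6 ≤ k) (b c : ℕ)
    (hb : k - 4 ≤ b) (hc : k - 4 ≤ c) :
    ¬ Coalition (pathGraph k) {i : Fin k | i.val = b} {i : Fin k | i.val = c} := by
  rintro ⟨d, na, nb, u⟩
  refine notdom_low hk _ ?_ u
  intro i hi
  simp only [Set.mem_union, Set.mem_setOf_eq] at hi
  omega


noncomputable def myF {k : ℕ} (As Bs Cs : Set (Fin k)) {P : Finset (Set (Fin k))}
    (x : {X : Set (Fin k) // X ∈ P}) : Fin 1 ⊕ Fin 3 :=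
  if x.1 = As then Sum.inl 0 else if x.1 = Bs then Sum.inr 0
    else if x.1 = Cs then Sum.inr 1 else Sum.inr 2

noncomputable def myG {k : ℕ} {As Bs Cs Ds : Set (Fin k)} {P : Finset (Set (Fin k))}
    (hA : As ∈ P) (hB : Bs ∈ P) (hC : Cs ∈ P) (hD : Ds ∈ P)
    (y : Fin 1 ⊕ Fin 3) : {X : Set (Fin k) // X ∈ P} :=
  match y with
  | Sum.inl _ => ⟨As, hA⟩
  | Sum.inr i => if i = 0 then ⟨Bs, hB⟩ else if i = 1 then ⟨Cs, hC⟩ else ⟨Ds, hD⟩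

section helperEq
variable {k : ℕ} {As Bs Cs Ds : Set (Fin k)} {P : Finset (Set (Fin k))}
  {hA : As ∈ P} {hB : Bs ∈ P} {hC : Cs ∈ P} {hD : Ds ∈ P}

lemma myF_A (h : As ∈ P) : myF As Bs Cs (⟨As, h⟩ : {X // X ∈ P}) = Sum.inl 0 :=
  if_pos rfl

lemma myF_B (nBA : Bs ≠ As) (h : Bs ∈ P) :
    myF As Bs Cs (⟨Bs, h⟩ : {X // X ∈ P}) = Sum.inr 0 := by
  unfold myF; rw [if_neg nBA, if_pos rfl]

lemma myF_C (nCA : Cs ≠ As) (nCB : Cs ≠ Bs) (h : Cs ∈ P) :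
    myF As Bs Cs (⟨Cs, h⟩ : {X // X ∈ P}) = Sum.inr 1 := by
  unfold myF; rw [if_neg nCA, if_neg nCB, if_pos rfl]

lemma myF_D (nDA : Ds ≠ As) (nDB : Ds ≠ Bs) (nDC : Ds ≠ Cs) (h : Ds ∈ P) :
    myF As Bs Cs (⟨Ds, h⟩ : {X // X ∈ P}) = Sum.inr 2 := by
  unfold myF; rw [if_neg nDA, if_neg nDB, if_neg nDC]

lemma myG_inl (y : Fin 1) : myG hA hB hC hD (Sum.inl y) = ⟨As, hA⟩ := rfl

lemma myG_0 : myG hA hB hC hD (Sum.inr 0) = ⟨Bs, hB⟩ := by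
  simp [myG]

lemma myG_1 : myG hA hB hC hD (Sum.inr 1) = ⟨Cs, hC⟩ := by
  simp [myG]

lemma myG_2 : myG hA hB hC hD (Sum.inr 2) = ⟨Ds, hD⟩ := by
  simp [myG]

end helperEq

lemma stmt15_aux (k : ℕ) (hk : 6 ≤ k) (A B C D : Set (Fin k))
    (hA : A = {i : Fin k | i.val ≤ k - 5 ∨ i.val = k - 1})
    (hB : B = {i : Fin k | i.val = k - 4})
    (hC : C = {i : Fin k | i.val = k - 3})
    (hD : D = {i : Fin k | i.val = k - 2}) :
    IsCoalitionPartition (SimpleGraph.pathGraph k) {A, B, C, D} ∧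
      (A ≠ B ∧ A ≠ C ∧ A ≠ D ∧ B ≠ C ∧ B ≠ D ∧ C ≠ D) ∧
      Nonempty ((coalitionGraph (SimpleGraph.pathGraph k) {A, B, C, D}) ≃g
        completeBipartiteGraph (Fin 1) (Fin 3)) := by
  subst hA hB hC hD
  set As : Set (Fin k) := {i : Fin k | i.val ≤ k - 5 ∨ i.val = k - 1} with hAs
  set Bs : Set (Fin k) := {i : Fin k | i.val = k - 4} with hBs
  set Cs : Set (Fin k) := {i : Fin k | i.val = k - 3} with hCs
  set Ds : Set (Fin k) := {i : Fin k | i.val = k - 2} with hDs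
  have hAB : As ≠ Bs := by
    intro h
    have := Set.ext_iff.mp h ⟨0, by omega⟩
    simp only [hAs, hBs, Set.mem_setOf_eq, Fin.val_mk] at this
    omega
  have hAC : As ≠ Cs := by
    intro h
    have := Set.ext_iff.mp h ⟨0, by omega⟩
    simp only [hAs, hCs, Set.mem_setOf_eq, Fin.val_mk] at this
    omega
  have hAD : As ≠ Ds := by
    intro h
    have := Set.ext_iff.mp h ⟨0, by omega⟩
    simp only [hAs, hDs, Set.mem_setOf_eq, Fin.val_mk] at this
    omega
  have hBC : Bs ≠ Cs := by
    intro h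
    have := Set.ext_iff.mp h ⟨k - 4, by omega⟩
    simp only [hBs, hCs, Set.mem_setOf_eq, Fin.val_mk, true_iff] at this
    omega
  have hBD : Bs ≠ Ds := by
    intro h
    have := Set.ext_iff.mp h ⟨k - 4, by omega⟩
    simp only [hBs, hDs, Set.mem_setOf_eq, Fin.val_mk, true_iff] at this
    omega
  have hCD : Cs ≠ Ds := by
    intro h
    have := Set.ext_iff.mp h ⟨k - 3, by omega⟩
    simp only [hCs, hDs, Set.mem_setOf_eq, Fin.val_mk, true_iff] at this
    omega
  have ndA : ¬ Dominates (pathGraph k) As := notdom_A hk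
  have ndB : ¬ Dominates (pathGraph k) Bs :=
    notdom_low hk _ (by intro i hi; simp only [hBs, Set.mem_setOf_eq] at hi; omega)
  have ndC : ¬ Dominates (pathGraph k) Cs :=
    notdom_low hk _ (by intro i hi; simp only [hCs, Set.mem_setOf_eq] at hi; omega)
  have ndD : ¬ Dominates (pathGraph k) Ds :=
    notdom_low hk _ (by intro i hi; simp only [hDs, Set.mem_setOf_eq] at hi; omega)
  have cAB : Coalition (pathGraph k) As Bs := coal_AX hk _ (Or.inl rfl)
  have cAC : Coalition (pathGraph k) As Cs := coal_AX hk _ (Or.inr (Or.inl rfl))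
  have cAD : Coalition (pathGraph k) As Ds := coal_AX hk _ (Or.inr (Or.inr rfl))
  have ncBC : ¬ Coalition (pathGraph k) Bs Cs := notcoal_sing hk _ _ le_rfl (by omega)
  have ncBD : ¬ Coalition (pathGraph k) Bs Ds := notcoal_sing hk _ _ le_rfl (by omega)
  have ncCD : ¬ Coalition (pathGraph k) Cs Ds := notcoal_sing hk _ _ (by omega) (by omega)
  have hmem : ∀ X ∈ ({As, Bs, Cs, Ds} : Finset (Set (Fin k))),
      X = As ∨ X = Bs ∨ X = Cs ∨ X = Ds := by
    intro X hX
    simpa [Finset.mem_insert, Finset.mem_singleton] using hX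
  have memA : As ∈ ({As, Bs, Cs, Ds} : Finset (Set (Fin k))) := by simp
  have memB : Bs ∈ ({As, Bs, Cs, Ds} : Finset (Set (Fin k))) := by simp
  have memC : Cs ∈ ({As, Bs, Cs, Ds} : Finset (Set (Fin k))) := by simp
  have memD : Ds ∈ ({As, Bs, Cs, Ds} : Finset (Set (Fin k))) := by simp
  refine ⟨⟨?_, ?_, ?_, ?_⟩, ⟨hAB, hAC, hAD, hBC, hBD, hCD⟩, ?_⟩
  · -- nonempty
    intro X hX
    rcases hmem X hX with h | h | h | h <;> subst h
    · exact ⟨⟨0, by omega⟩, Or.inl (by simp only [Fin.val_mk]; omega)⟩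
    · exact ⟨⟨k - 4, by omega⟩, rfl⟩
    · exact ⟨⟨k - 3, by omega⟩, rfl⟩
    · exact ⟨⟨k - 2, by omega⟩, rfl⟩
  · -- pairwise disjoint
    intro X hX Y hY hne
    rcases hmem X hX with h | h | h | h <;> subst h <;>
      rcases hmem Y hY with h | h | h | h <;> subst h <;>
      first
        | exact absurd rfl hne
        | (rw [Set.disjoint_left]; intro i hi1 hi2;
           simp only [hAs, hBs, hCs, hDs, Set.mem_setOf_eq] at hi1 hi2; omega)
  · -- cover
    intro v
    have hvk : v.val < k := v.isLt
    rcases (show v.val ≤ k - 5 ∨ v.val = k - 4 ∨ v.val = k - 3 ∨ v.val = k - 2 ∨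
        v.val = k - 1 from by omega) with h | h | h | h | h
    · exact ⟨As, memA, Or.inl h⟩
    · exact ⟨Bs, memB, h⟩
    · exact ⟨Cs, memC, h⟩
    · exact ⟨Ds, memD, h⟩
    · exact ⟨As, memA, Or.inr h⟩
  · -- each part is in a coalition
    intro X hX
    rcases hmem X hX with h | h | h | h <;> subst h
    · exact Or.inr ⟨ndA, Bs, memB, hAB.symm, cAB⟩
    · exact Or.inr ⟨ndB, As, memA, hAB, coal_symm cAB⟩
    · exact Or.inr ⟨ndC, As, memA, hAC, coal_symm cAC⟩
    · exact Or.inr ⟨ndD, As, memA, hAD, coal_symm cAD⟩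
  · -- iso to K_{1,3}
    have nBA := Ne.symm hAB
    have nCA := Ne.symm hAC
    have nDA := Ne.symm hAD
    have nCB := Ne.symm hBC
    have nDB := Ne.symm hBD
    have nDC := Ne.symm hCD
    refine ⟨⟨⟨myF As Bs Cs, myG memA memB memC memD, ?_, ?_⟩, ?_⟩⟩
    · -- left inverse
      rintro ⟨X, hX⟩
      rcases hmem X hX with h | h | h | h <;> subst h
      · rw [myF_A, myG_inl]
      · rw [myF_B nBA, myG_0]
      · rw [myF_C nCA nCB, myG_1]
      · rw [myF_D nDA nDB nDC, myG_2]
    · -- right inverse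
      rintro (y | y)
      · rw [myG_inl, myF_A]
        exact congrArg Sum.inl (Subsingleton.elim _ _)
      · match y with
        | 0 => rw [myG_0, myF_B nBA]
        | 1 => rw [myG_1, myF_C nCA nCB]
        | 2 => rw [myG_2, myF_D nDA nDB nDC]
    · -- map_rel_iff
      rintro ⟨X, hX⟩ ⟨Y, hY⟩
      rcases hmem X hX with h | h | h | h <;> subst h <;>
        rcases hmem Y hY with h | h | h | h <;> subst h
      · exact iff_of_false (by simp only [Equiv.coe_fn_mk, myF_A, myF_A]; simp) (coal_self)
      · exact iff_of_true (by simp only [Equiv.coe_fn_mk, myF_A, myF_B nBA]; simp) (cAB)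
      · exact iff_of_true (by simp only [Equiv.coe_fn_mk, myF_A, myF_C nCA nCB]; simp) (cAC)
      · exact iff_of_true (by simp only [Equiv.coe_fn_mk, myF_A, myF_D nDA nDB nDC]; simp) (cAD)
      · exact iff_of_true (by simp only [Equiv.coe_fn_mk, myF_B nBA, myF_A]; simp) (coal_symm cAB)
      · exact iff_of_false (by simp only [Equiv.coe_fn_mk, myF_B nBA, myF_B nBA]; simp) (coal_self)
      · exact iff_of_false (by simp only [Equiv.coe_fn_mk, myF_B nBA, myF_C nCA nCB]; simp) (ncBC)
      · exact iff_of_false (by simp only [Equiv.coe_fn_mk, myF_B nBA, myF_D nDA nDB nDC]; simp) (ncBD)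
      · exact iff_of_true (by simp only [Equiv.coe_fn_mk, myF_C nCA nCB, myF_A]; simp) (coal_symm cAC)
      · exact iff_of_false (by simp only [Equiv.coe_fn_mk, myF_C nCA nCB, myF_B nBA]; simp) (fun hc => ncBC (coal_symm hc))
      · exact iff_of_false (by simp only [Equiv.coe_fn_mk, myF_C nCA nCB, myF_C nCA nCB]; simp) (coal_self)
      · exact iff_of_false (by simp only [Equiv.coe_fn_mk, myF_C nCA nCB, myF_D nDA nDB nDC]; simp) (ncCD)
      · exact iff_of_true (by simp only [Equiv.coe_fn_mk, myF_D nDA nDB nDC, myF_A]; simp) (coal_symm cAD)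
      · exact iff_of_false (by simp only [Equiv.coe_fn_mk, myF_D nDA nDB nDC, myF_B nBA]; simp) (fun hc => ncBD (coal_symm hc))
      · exact iff_of_false (by simp only [Equiv.coe_fn_mk, myF_D nDA nDB nDC, myF_C nCA nCB]; simp) (fun hc => ncCD (coal_symm hc))
      · exact iff_of_false (by simp only [Equiv.coe_fn_mk, myF_D nDA nDB nDC, myF_D nDA nDB nDC]; simp) (coal_self)

theorem stmt15 (k : ℕ) (hk : 6 ≤ k) :
    (∃ P : Finset (Set (Fin k)),
      IsCoalitionPartition (SimpleGraph.pathGraph k) P ∧ P.card = 4 ∧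
      Nonempty ((coalitionGraph (SimpleGraph.pathGraph k) P) ≃g
        completeBipartiteGraph (Fin 1) (Fin 3))) ∧
    -- in particular, the explicit partition
    -- `A = {s_1,…,s_{k-4}} ∪ {s_k}, B = {s_{k-3}}, C = {s_{k-2}}, D = {s_{k-1}}`
    -- (with vertices of `P_k` indexed `0,…,k-1`, so `s_i` is index `i-1`) works:
    ∀ (A B C D : Set (Fin k)),
      A = {i : Fin k | i.val ≤ k - 5 ∨ i.val = k - 1} →
      B = {i : Fin k | i.val = k - 4} →
      C = {i : Fin k | i.val = k - 3} →
      D = {i : Fin k | i.val = k - 2} →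
      IsCoalitionPartition (SimpleGraph.pathGraph k) {A, B, C, D} ∧
      Nonempty ((coalitionGraph (SimpleGraph.pathGraph k) {A, B, C, D}) ≃g
        completeBipartiteGraph (Fin 1) (Fin 3)) := by
  constructor
  · obtain ⟨hpart, ⟨hAB, hAC, hAD, hBC, hBD, hCD⟩, hiso⟩ :=
      stmt15_aux k hk _ _ _ _ rfl rfl rfl rfl
    refine ⟨_, hpart, ?_, hiso⟩
    rw [Finset.card_insert_of_notMem (by simp [hAB, hAC, hAD]),
      Finset.card_insert_of_notMem (by simp [hBC, hBD]),
      Finset.card_insert_of_notMem (by simp [hCD]), Finset.card_singleton]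
  · intro A B C D hA hB hC hD
    obtain ⟨hpart, _, hiso⟩ := stmt15_aux k hk A B C D hA hB hC hD
    exact ⟨hpart, hiso⟩
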